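/- Let m ≥ 1 and l ≥ k ≥ 0 be natural numbers, and let π : ℝ^l_m → ℝ^k_m be the canonical projection of truncated polynomial algebras. Then the induced map on automorphism groups is surjective: for every ℝ-algebra automorphism τ of ℝ^k_m there exists an ℝ-algebra automorphism σ of ℝ^l_m such that π ∘ σ = τ ∘ π. -/

import Mathlib

set_option synthInstance.maxHeartbeats 1000000
set_option maxHeartbeats 1000000

noncomputable section

/-- The ideal of `ℝ[ξ₁,…,ξ_m]` generated by the variables. -/
def varIdeal (m : ℕ) : Ideal (MvPolynomial (Fin m) ℝ) :=
  Ideal.span (Set.range MvPolynomial.X)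

/-- The truncated polynomial algebra `ℝ^l_m = ℝ[ξ₁,…,ξ_m]/𝔪^{l+1}`. -/
abbrev TruncPolyAlg (m l : ℕ) : Type :=
  MvPolynomial (Fin m) ℝ ⧸ (varIdeal m) ^ (l + 1)

/-- The canonical projection `ℝ^l_m → ℝ^k_m` for `l ≥ k`, induced on the
quotients by the identity of the polynomial ring. -/
def truncProj (m l k : ℕ) (h : k ≤ l) : TruncPolyAlg m l →+* TruncPolyAlg m k :=
  Ideal.Quotient.factor (S := (varIdeal m) ^ (l + 1)) (T := (varIdeal m) ^ (k + 1))
    (Ideal.pow_le_pow_right (by omega))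

lemma X_mem_varIdeal (m : ℕ) (i : Fin m) : MvPolynomial.X i ∈ varIdeal m :=
  Ideal.subset_span ⟨i, rfl⟩

/-- Every polynomial is congruent to its constant term modulo the variable ideal. -/
lemma sub_C_mem_varIdeal (m : ℕ) (P : MvPolynomial (Fin m) ℝ) :
    P - MvPolynomial.C (MvPolynomial.constantCoeff P) ∈ varIdeal m := by
  induction P using MvPolynomial.induction_on with
  | C a => simp
  | add P Q hP hQ =>
      have : P + Q - MvPolynomial.C (MvPolynomial.constantCoeff (P + Q))
          = (P - MvPolynomial.C (MvPolynomial.constantCoeff P))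
            + (Q - MvPolynomial.C (MvPolynomial.constantCoeff Q)) := by
        simp [map_add]; ring
      rw [this]; exact add_mem hP hQ
  | mul_X P i hP =>
      have : MvPolynomial.constantCoeff (P * MvPolynomial.X i) = 0 := by simp
      rw [this]
      simp only [map_zero, sub_zero]
      exact Ideal.mul_mem_left _ _ (X_mem_varIdeal m i)

lemma varIdeal_eq_ker (m : ℕ) :
    varIdeal m = RingHom.ker (MvPolynomial.constantCoeff :
      MvPolynomial (Fin m) ℝ →+* ℝ) := by
  apply le_antisymm
  · rw [varIdeal, Ideal.span_le]
    rintro _ ⟨i, rfl⟩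
    simp [RingHom.mem_ker]
  · intro P hP
    rw [RingHom.mem_ker] at hP
    have := sub_C_mem_varIdeal m P
    rwa [hP, map_zero, sub_zero] at this

lemma varIdeal_isPrime (m : ℕ) : (varIdeal m).IsPrime := by
  rw [varIdeal_eq_ker]
  exact RingHom.ker_isPrime _

/-- If an algebra endomorphism `h` is congruent to the identity modulo `M ^ 2`,
then on `M ^ n` it is congruent to the identity modulo `M ^ (n + 1)`. -/
lemma key_cong {A : Type*} [CommRing A] [Algebra ℝ A] (M : Ideal A)
    (h : A →ₐ[ℝ] A) (hh : ∀ x, h x - x ∈ M ^ 2) :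
    ∀ n (c : A), c ∈ M ^ n → c - h c ∈ M ^ (n + 1) := by
  intro n
  induction n with
  | zero =>
      intro c _
      have : c - h c = -(h c - c) := by ring
      rw [this]
      exact neg_mem (Ideal.pow_le_pow_right (show 1 ≤ 2 by norm_num) (hh c))
  | succ n ih =>
      intro c hc
      rw [pow_succ] at hc
      refine Submodule.mul_induction_on hc ?_ ?_
      · intro x hx y hy
        have h1 : (x - h x) * y ∈ M ^ (n + 1 + 1) := by
          rw [pow_succ]
          exact Ideal.mul_mem_mul (ih x hx) hy
        have hhx : h x ∈ M ^ n := by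
          have : h x = x - (x - h x) := by ring
          rw [this]
          exact sub_mem hx (Ideal.pow_le_pow_right (show n ≤ n+1 by omega) (ih x hx))
        have h2 : h x * (y - h y) ∈ M ^ (n + 1 + 1) := by
          have : M ^ (n + 1 + 1) = M ^ n * M ^ 2 := by rw [← pow_add]
          rw [this]
          refine Ideal.mul_mem_mul hhx ?_
          have : y - h y = -(h y - y) := by ring
          rw [this]; exact neg_mem (hh y)
        have : x * y - h (x * y) = (x - h x) * y + h x * (y - h y) := by
          rw [map_mul]; ring
        rw [this]
        exact add_mem h1 h2
      · intro x y hx hy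
        have : x + y - h (x + y) = (x - h x) + (y - h y) := by
          rw [map_add]; ring
        rw [this]
        exact add_mem hx hy

/-- An algebra endomorphism congruent to the identity modulo the square of a
nilpotent ideal is bijective. -/
lemma key_bij {A : Type*} [CommRing A] [Algebra ℝ A] (M : Ideal A) (N : ℕ)
    (hM : M ^ N = ⊥) (h : A →ₐ[ℝ] A) (hh : ∀ x, h x - x ∈ M ^ 2) :
    Function.Bijective h := by
  constructor
  · intro a b hab
    have hd : h (a - b) = 0 := by rw [map_sub, hab, sub_self]
    have : ∀ n, a - b ∈ M ^ n := by
      intro n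
      induction n with
      | zero => simp
      | succ n ih =>
          have := key_cong M h hh n (a - b) ih
          rwa [hd, sub_zero] at this
    have := this N
    rw [hM] at this
    exact sub_eq_zero.mp (by simpa using this)
  · intro a
    have : ∀ n, ∃ b, a - h b ∈ M ^ n := by
      intro n
      induction n with
      | zero => exact ⟨0, by simp⟩
      | succ n ih =>
          obtain ⟨b, hb⟩ := ih
          refine ⟨b + (a - h b), ?_⟩
          have := key_cong M h hh n (a - h b) hb
          have heq : a - h (b + (a - h b)) = (a - h b) - h (a - h b) := by
            rw [map_add]; ring
          rwa [heq]
    obtain ⟨b, hb⟩ := this N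
    rw [hM] at hb
    exact ⟨b, (sub_eq_zero.mp (by simpa using hb)).symm⟩

/-- Every algebra endomorphism of `ℝ^k_m` lifts along the canonical projection
to an algebra endomorphism of `ℝ^l_m`. -/
lemma lift_exists (m l k : ℕ) (hkl : k ≤ l)
    (τ : TruncPolyAlg m k →ₐ[ℝ] TruncPolyAlg m k) :
    ∃ f : TruncPolyAlg m l →ₐ[ℝ] TruncPolyAlg m l,
      ∀ x, truncProj m l k hkl (f x) = τ (truncProj m l k hkl x) := by
  set mkl := Ideal.Quotient.mk ((varIdeal m) ^ (l + 1)) with hmkl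
  set mkk := Ideal.Quotient.mk ((varIdeal m) ^ (k + 1)) with hmkk
  -- choose good lifts of τ (X i)
  have hQ : ∀ i : Fin m, ∃ Q : MvPolynomial (Fin m) ℝ,
      Q ∈ varIdeal m ∧ mkk Q = τ (mkk (MvPolynomial.X i)) := by
    intro i
    obtain ⟨Q, hQ⟩ := Ideal.Quotient.mk_surjective (I := (varIdeal m) ^ (k + 1))
      (τ (mkk (MvPolynomial.X i)))
    refine ⟨Q, ?_, hQ⟩
    have hz : mkk (MvPolynomial.X i ^ (k + 1)) = 0 :=
      Ideal.Quotient.eq_zero_iff_mem.mpr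
        (Ideal.pow_mem_pow (X_mem_varIdeal m i) (k + 1))
    have hnil : (τ (mkk (MvPolynomial.X i))) ^ (k + 1) = 0 := by
      rw [← map_pow, ← map_pow, hz, map_zero]
    have hQp : Q ^ (k + 1) ∈ (varIdeal m) ^ (k + 1) := by
      rw [← Ideal.Quotient.eq_zero_iff_mem (I := (varIdeal m) ^ (k + 1)), map_pow, hQ, hnil]
    exact (varIdeal_isPrime m).mem_of_pow_mem _
      (Ideal.pow_le_self (Nat.succ_ne_zero k) hQp)
  choose Q hQmem hQeq using hQ
  set p : Fin m → TruncPolyAlg m l := fun i => mkl (Q i) with hp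
  set F : MvPolynomial (Fin m) ℝ →ₐ[ℝ] TruncPolyAlg m l := MvPolynomial.aeval p with hF
  -- F kills 𝔪^{l+1}
  have hker : ∀ P ∈ (varIdeal m) ^ (l + 1), F P = 0 := by
    have hmap : Ideal.map (F : MvPolynomial (Fin m) ℝ →+* TruncPolyAlg m l) (varIdeal m)
        ≤ Ideal.map mkl (varIdeal m) := by
      refine Ideal.map_le_iff_le_comap.mpr ?_
      show Ideal.span (Set.range MvPolynomial.X) ≤ _
      refine Ideal.span_le.mpr ?_
      rintro _ ⟨i, rfl⟩
      show (F : MvPolynomial (Fin m) ℝ →+* TruncPolyAlg m l) (MvPolynomial.X i)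
          ∈ Ideal.map mkl (varIdeal m)
      have : (F : MvPolynomial (Fin m) ℝ →+* TruncPolyAlg m l) (MvPolynomial.X i)
          = mkl (Q i) := by simp [hF, hp]
      rw [this]
      exact Ideal.mem_map_of_mem _ (hQmem i)
    have hbot : (Ideal.map mkl (varIdeal m)) ^ (l + 1)
        = (⊥ : Ideal (TruncPolyAlg m l)) := by
      rw [← Ideal.map_pow, hmkl, Ideal.map_quotient_self]
    intro P hP
    have h1 : F P ∈ Ideal.map (F : MvPolynomial (Fin m) ℝ →+* TruncPolyAlg m l)
        ((varIdeal m) ^ (l + 1)) := Ideal.mem_map_of_mem _ hP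
    rw [Ideal.map_pow] at h1
    have h2 := (Ideal.pow_right_mono hmap (l + 1)) h1
    rw [hbot] at h2
    simpa using h2
  refine ⟨Ideal.Quotient.liftₐ _ F hker, ?_⟩
  have key : ∀ P : MvPolynomial (Fin m) ℝ,
      truncProj m l k hkl (F P) = τ (mkk P) := by
    have := MvPolynomial.ringHom_ext (f := (truncProj m l k hkl).comp
          (F : MvPolynomial (Fin m) ℝ →+* TruncPolyAlg m l))
        (g := (τ : TruncPolyAlg m k →+* TruncPolyAlg m k).comp mkk)
        (fun r => ?_) (fun i => ?_)
    · intro P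
      exact congrFun (congrArg DFunLike.coe this) P
    · simp only [RingHom.coe_comp, Function.comp_apply, AlgHom.coe_toRingHom]
      have h1 : F (MvPolynomial.C r) = algebraMap ℝ (TruncPolyAlg m l) r := by
        simp [hF]
      have h2 : mkk (MvPolynomial.C r) = algebraMap ℝ (TruncPolyAlg m k) r := by
        rw [← MvPolynomial.algebraMap_eq, hmkk, Ideal.Quotient.mk_algebraMap]
      have h3 : (algebraMap ℝ (TruncPolyAlg m l)) r = mkl (MvPolynomial.C r) := by
        rw [← MvPolynomial.algebraMap_eq, hmkl, Ideal.Quotient.mk_algebraMap]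
      rw [h1, h2, AlgHom.commutes, h3]
      show Ideal.Quotient.factor _ (mkl (MvPolynomial.C r)) = _
      rw [hmkl, Ideal.Quotient.factor_mk, ← hmkk, h2]
    · simp only [RingHom.coe_comp, Function.comp_apply, AlgHom.coe_toRingHom]
      have h1 : F (MvPolynomial.X i) = mkl (Q i) := by simp [hF, hp]
      rw [h1]
      show Ideal.Quotient.factor _ (mkl (Q i)) = _
      rw [hmkl, Ideal.Quotient.factor_mk, ← hmkk, hQeq]
  intro x
  obtain ⟨P, rfl⟩ := Ideal.Quotient.mk_surjective (I := (varIdeal m) ^ (l + 1)) x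
  show truncProj m l k hkl (F P) = τ (truncProj m l k hkl (mkl P))
  have h4 : truncProj m l k hkl (mkl P) = mkk P := by
    show Ideal.Quotient.factor _ (mkl P) = _
    rw [hmkl, Ideal.Quotient.factor_mk, ← hmkk]
  rw [h4]
  exact key P

/-- Elements with equal projections differ by an element of `M ^ (k+1)`. -/
lemma sub_mem_of_proj_eq (m l k : ℕ) (hkl : k ≤ l) {x y : TruncPolyAlg m l}
    (hxy : truncProj m l k hkl x = truncProj m l k hkl y) :
    x - y ∈ (Ideal.map (Ideal.Quotient.mk ((varIdeal m) ^ (l + 1))) (varIdeal m)) ^ (k + 1) := by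
  obtain ⟨P, rfl⟩ := Ideal.Quotient.mk_surjective (I := (varIdeal m) ^ (l + 1)) x
  obtain ⟨R, rfl⟩ := Ideal.Quotient.mk_surjective (I := (varIdeal m) ^ (l + 1)) y
  have h1 : truncProj m l k hkl (Ideal.Quotient.mk _ P) = Ideal.Quotient.mk _ P :=
    Ideal.Quotient.factor_mk _ _
  have h2 : truncProj m l k hkl (Ideal.Quotient.mk _ R) = Ideal.Quotient.mk _ R :=
    Ideal.Quotient.factor_mk _ _
  rw [h1, h2] at hxy
  have hmem : P - R ∈ (varIdeal m) ^ (k + 1) := Ideal.Quotient.eq.mp hxy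
  rw [← Ideal.map_pow]
  rw [← map_sub]
  exact Ideal.mem_map_of_mem _ hmem

/-- In `ℝ^0_m` every element is a scalar, so every algebra endomorphism is
the identity. -/
lemma trunc_zero_id (m : ℕ) (τ : TruncPolyAlg m 0 →ₐ[ℝ] TruncPolyAlg m 0)
    (y : TruncPolyAlg m 0) : τ y = y := by
  obtain ⟨P, rfl⟩ := Ideal.Quotient.mk_surjective (I := (varIdeal m) ^ (0 + 1)) y
  have h1 : Ideal.Quotient.mk ((varIdeal m) ^ (0 + 1)) P
      = algebraMap ℝ (TruncPolyAlg m 0) (MvPolynomial.constantCoeff P) := by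
    have : Ideal.Quotient.mk ((varIdeal m) ^ (0 + 1)) P
        = Ideal.Quotient.mk ((varIdeal m) ^ (0 + 1))
          (MvPolynomial.C (MvPolynomial.constantCoeff P)) := by
      refine Ideal.Quotient.eq.mpr ?_
      rw [pow_one]
      exact sub_C_mem_varIdeal m P
    rw [this, ← MvPolynomial.algebraMap_eq, Ideal.Quotient.mk_algebraMap]
  rw [h1, AlgHom.commutes]

/-- For `m ≥ 1` and `l ≥ k ≥ 0`, the map induced by the
canonical projection `π : ℝ^l_m → ℝ^k_m` on the groups of ℝ-algebra
automorphisms is surjective: every automorphism `τ` of `ℝ^k_m` lifts to an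
automorphism `σ` of `ℝ^l_m` with `π ∘ σ = τ ∘ π`. -/
theorem truncProj_automorphism_surjective (m l k : ℕ) (hm : 1 ≤ m) (hkl : k ≤ l)
    (τ : TruncPolyAlg m k ≃ₐ[ℝ] TruncPolyAlg m k) :
    ∃ σ : TruncPolyAlg m l ≃ₐ[ℝ] TruncPolyAlg m l,
      ∀ x : TruncPolyAlg m l,
        truncProj m l k hkl (σ x) = τ (truncProj m l k hkl x) := by
  rcases Nat.eq_zero_or_pos k with rfl | hk
  · -- k = 0 : the only automorphism is the identity
    exact ⟨AlgEquiv.refl, fun x => (trunc_zero_id m τ.toAlgHom _).symm⟩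
  · -- k ≥ 1
    obtain ⟨f, hf⟩ := lift_exists m l k hkl τ.toAlgHom
    obtain ⟨g, hg⟩ := lift_exists m l k hkl τ.symm.toAlgHom
    set M := Ideal.map (Ideal.Quotient.mk ((varIdeal m) ^ (l + 1))) (varIdeal m) with hM
    have hMbot : M ^ (l + 1) = ⊥ := by
      rw [hM, ← Ideal.map_pow, Ideal.map_quotient_self]
    have hpow : M ^ (k + 1) ≤ M ^ 2 := Ideal.pow_le_pow_right (by omega)
    -- g ∘ f is congruent to the identity mod M^2
    have hgf : ∀ x, (g.comp f) x - x ∈ M ^ 2 := by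
      intro x
      refine hpow ?_
      refine sub_mem_of_proj_eq m l k hkl ?_
      show truncProj m l k hkl (g (f x)) = _
      rw [hg, hf]
      simp
    have hfg : ∀ x, (f.comp g) x - x ∈ M ^ 2 := by
      intro x
      refine hpow ?_
      refine sub_mem_of_proj_eq m l k hkl ?_
      show truncProj m l k hkl (f (g x)) = _
      rw [hf, hg]
      simp
    have hbij1 := key_bij M (l + 1) hMbot (g.comp f) hgf
    have hbij2 := key_bij M (l + 1) hMbot (f.comp g) hfg
    have hfinj : Function.Injective f := by
      intro a b hab
      exact hbij1.injective (show (g.comp f) a = (g.comp f) b by simp [hab])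
    have hfsurj : Function.Surjective f := by
      intro a
      obtain ⟨b, hb⟩ := hbij2.surjective a
      exact ⟨g b, hb⟩
    refine ⟨AlgEquiv.ofBijective f ⟨hfinj, hfsurj⟩, fun x => ?_⟩
    show truncProj m l k hkl (f x) = _
    rw [hf]
    rfl
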